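/- Let F be a compact hereditary family on an infinite cardinal κ and let α < κ be such that the singleton {α} belongs to the closure of F^MAX in 2^κ. Then the coordinate functional e_α* belongs to the weak*-closure in X_F* of the set of extreme points of the closed unit ball of X_F*. -/

import Mathlib

open scoped Classical

noncomputable section

/-- Characteristic function of a finite set, as an element of the Cantor cube `2^ι`. -/
def chi {ι : Type*} (s : Finset ι) : ι → Bool := fun a => decide (a ∈ s)

/-- The copy of a collection of finite sets inside the Cantor cube `2^ι`. -/
def chiImg {ι : Type*} (F : Set (Finset ι)) : Set (ι → Bool) := chi '' F

/-- `F` is a family: it contains the empty set and all singletons. -/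
def IsFam {ι : Type*} (F : Set (Finset ι)) : Prop := ∅ ∈ F ∧ ∀ a : ι, {a} ∈ F

/-- `F` is hereditary: it is closed under subsets. -/
def IsHereditary {ι : Type*} (F : Set (Finset ι)) : Prop :=
  ∀ ⦃s t : Finset ι⦄, s ⊆ t → t ∈ F → s ∈ F

/-- `F` is compact: its copy in the Cantor cube `2^ι` is closed
(equivalently, compact). -/
def IsCompactFam {ι : Type*} (F : Set (Finset ι)) : Prop := IsClosed (chiImg F)

/-- The set of maximal elements of `F` with respect to inclusion. -/
def famMAX {ι : Type*} (F : Set (Finset ι)) : Set (Finset ι) :=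
  {s ∈ F | ∀ t ∈ F, s ⊆ t → s = t}

/-- The image `{π[s] : s ∈ F}` of a collection of finite sets under a permutation of the
index set. -/
def permImg {ι : Type*} (π : Equiv.Perm ι) (F : Set (Finset ι)) : Set (Finset ι) :=
  (fun s => Finset.image π s) '' F

variable {ι : Type*}

/-- A family of finite subsets of `ι`, containing the empty set and all singletons. -/
structure CombFamily (ι : Type*) where
  sets : Set (Finset ι)
  empty_mem : ∅ ∈ sets
  singleton_mem : ∀ a : ι, {a} ∈ sets

variable (𝕂 : Type*) [RCLike 𝕂]

/-- The set of candidate values for the norm of `x` in the combinatorial space. -/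
def normValues (F : CombFamily ι) (x : ι →₀ 𝕂) : Set ℝ :=
  (fun s : Finset ι => ∑ a ∈ s, ‖x a‖) '' F.sets

lemma normValues_nonempty (F : CombFamily ι) (x : ι →₀ 𝕂) : (normValues 𝕂 F x).Nonempty :=
  ⟨∑ a ∈ (∅ : Finset ι), ‖x a‖, ⟨∅, F.empty_mem, rfl⟩⟩

lemma normValues_bddAbove (F : CombFamily ι) (x : ι →₀ 𝕂) : BddAbove (normValues 𝕂 F x) := by
  refine ⟨∑ a ∈ x.support, ‖x a‖, ?_⟩
  rintro r ⟨s, _, rfl⟩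
  dsimp only
  have h1 : ∑ a ∈ s, ‖x a‖ = ∑ a ∈ s ∩ x.support, ‖x a‖ := by
    refine (Finset.sum_subset (Finset.inter_subset_left) ?_).symm
    intro a ha hna
    have : x a = 0 := by
      by_contra h
      exact hna (Finset.mem_inter.2 ⟨ha, Finsupp.mem_support_iff.2 h⟩)
    simp [this]
  rw [h1]
  exact Finset.sum_le_sum_of_subset_of_nonneg Finset.inter_subset_right
    (fun a _ _ => norm_nonneg _)

/-- The norm of the combinatorial space `X_F`:
`‖x‖ = sup { ∑_{a ∈ s} |x a| : s ∈ F }`. -/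
def combNorm (F : CombFamily ι) (x : ι →₀ 𝕂) : ℝ := sSup (normValues 𝕂 F x)

lemma sum_le_combNorm (F : CombFamily ι) (x : ι →₀ 𝕂) {s : Finset ι} (hs : s ∈ F.sets) :
    ∑ a ∈ s, ‖x a‖ ≤ combNorm 𝕂 F x :=
  le_csSup (normValues_bddAbove 𝕂 F x) ⟨s, hs, rfl⟩

lemma combNorm_le (F : CombFamily ι) (x : ι →₀ 𝕂) {c : ℝ}
    (h : ∀ s ∈ F.sets, ∑ a ∈ s, ‖x a‖ ≤ c) : combNorm 𝕂 F x ≤ c :=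
  csSup_le (normValues_nonempty 𝕂 F x) (by rintro r ⟨s, hs, rfl⟩; exact h s hs)

/-- The space of finitely supported functions `ι →₀ 𝕂`, regarded as a normed space
with the norm induced by the family `F`. -/
def C00 (F : CombFamily ι) (𝕂 : Type*) [RCLike 𝕂] : Type _ := ι →₀ 𝕂

variable {𝕂} in
/-- The identity map from `C00 F 𝕂` to `ι →₀ 𝕂`. -/
def C00.toFinsupp {F : CombFamily ι} (x : C00 F 𝕂) : ι →₀ 𝕂 := x

variable {𝕂} in
/-- The identity map from `ι →₀ 𝕂` to `C00 F 𝕂`. -/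
def C00.of (F : CombFamily ι) (x : ι →₀ 𝕂) : C00 F 𝕂 := x

instance (F : CombFamily ι) : AddCommGroup (C00 F 𝕂) :=
  inferInstanceAs (AddCommGroup (ι →₀ 𝕂))

instance (F : CombFamily ι) : Module 𝕂 (C00 F 𝕂) :=
  inferInstanceAs (Module 𝕂 (ι →₀ 𝕂))

variable {𝕂}

lemma C00.toFinsupp_add {F : CombFamily ι} (x y : C00 F 𝕂) :
    (x + y).toFinsupp = x.toFinsupp + y.toFinsupp := rfl

lemma C00.toFinsupp_neg {F : CombFamily ι} (x : C00 F 𝕂) :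
    (-x).toFinsupp = -x.toFinsupp := rfl

lemma C00.toFinsupp_smul {F : CombFamily ι} (c : 𝕂) (x : C00 F 𝕂) :
    (c • x).toFinsupp = c • x.toFinsupp := rfl

variable (𝕂)

instance C00.instNormedAddCommGroup (F : CombFamily ι) : NormedAddCommGroup (C00 F 𝕂) :=
  AddGroupNorm.toNormedAddCommGroup
    { toFun := fun x => combNorm 𝕂 F x.toFinsupp
      map_zero' := by
        refine le_antisymm (combNorm_le 𝕂 F _ ?_) ?_
        · intro s _
          have : (0 : C00 F 𝕂).toFinsupp = 0 := rfl
          simp [this]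
        · have := sum_le_combNorm 𝕂 F (0 : C00 F 𝕂).toFinsupp F.empty_mem
          simpa using this
      add_le' := by
        intro x y
        refine combNorm_le 𝕂 F _ ?_
        intro s hs
        rw [C00.toFinsupp_add]
        calc ∑ a ∈ s, ‖(x.toFinsupp + y.toFinsupp) a‖
            ≤ ∑ a ∈ s, (‖x.toFinsupp a‖ + ‖y.toFinsupp a‖) := by
              refine Finset.sum_le_sum ?_
              intro a _
              rw [Finsupp.add_apply]
              exact norm_add_le _ _
          _ = (∑ a ∈ s, ‖x.toFinsupp a‖) + ∑ a ∈ s, ‖y.toFinsupp a‖ :=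
              Finset.sum_add_distrib
          _ ≤ combNorm 𝕂 F x.toFinsupp + combNorm 𝕂 F y.toFinsupp :=
              add_le_add (sum_le_combNorm 𝕂 F _ hs) (sum_le_combNorm 𝕂 F _ hs)
      neg' := by
        intro x
        rw [C00.toFinsupp_neg]
        have hfun : (fun s : Finset ι => ∑ a ∈ s, ‖(-x.toFinsupp) a‖)
            = fun s : Finset ι => ∑ a ∈ s, ‖x.toFinsupp a‖ := by
          funext s
          refine Finset.sum_congr rfl fun a _ => ?_
          rw [Finsupp.neg_apply, norm_neg]
        unfold combNorm normValues
        rw [hfun]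
      eq_zero_of_map_eq_zero' := by
        intro x hx
        have hα : ∀ a : ι, x.toFinsupp a = 0 := by
          intro a
          have h1 : ‖x.toFinsupp a‖ ≤ combNorm 𝕂 F x.toFinsupp := by
            have := sum_le_combNorm 𝕂 F x.toFinsupp (F.singleton_mem a)
            simpa using this
          rw [hx] at h1
          exact norm_eq_zero.1 (le_antisymm h1 (norm_nonneg _))
        have : x.toFinsupp = 0 := Finsupp.ext hα
        exact this }

lemma C00.norm_def {F : CombFamily ι} (x : C00 F 𝕂) : ‖x‖ = combNorm 𝕂 F x.toFinsupp := rfl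

instance C00.instNormedSpace (F : CombFamily ι) : NormedSpace 𝕂 (C00 F 𝕂) where
  norm_smul_le c x := by
    rw [C00.norm_def, C00.norm_def, C00.toFinsupp_smul]
    refine combNorm_le 𝕂 F _ ?_
    intro s hs
    have : ∑ a ∈ s, ‖(c • x.toFinsupp) a‖ = ‖c‖ * ∑ a ∈ s, ‖x.toFinsupp a‖ := by
      rw [Finset.mul_sum]
      refine Finset.sum_congr rfl ?_
      intro a _
      rw [Finsupp.smul_apply]
      exact norm_smul c _
    rw [this]
    exact mul_le_mul_of_nonneg_left (sum_le_combNorm 𝕂 F _ hs) (norm_nonneg c)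

/-- The combinatorial Banach space `X_F`: the completion of `c₀₀(ι)` under the norm
induced by the family `F`. -/
def XF (F : CombFamily ι) (𝕂 : Type*) [RCLike 𝕂] : Type _ :=
  UniformSpace.Completion (C00 F 𝕂)

instance (F : CombFamily ι) : NormedAddCommGroup (XF F 𝕂) :=
  inferInstanceAs (NormedAddCommGroup (UniformSpace.Completion (C00 F 𝕂)))

instance (F : CombFamily ι) : NormedSpace 𝕂 (XF F 𝕂) :=
  inferInstanceAs (NormedSpace 𝕂 (UniformSpace.Completion (C00 F 𝕂)))

instance (F : CombFamily ι) : CompleteSpace (XF F 𝕂) :=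
  inferInstanceAs (CompleteSpace (UniformSpace.Completion (C00 F 𝕂)))

/-- The canonical unit vector basis `(e_a)` of the combinatorial space `X_F`. -/
def unitVec (F : CombFamily ι) (a : ι) : XF F 𝕂 :=
  (UniformSpace.Completion.toComplₗᵢ (𝕜 := 𝕂) (E := C00 F 𝕂))
    (C00.of F (Finsupp.single a 1))

/-- The coordinate functional `e_a^*` on `c₀₀`, as a continuous linear map. -/
def coordC00 (F : CombFamily ι) (a : ι) : C00 F 𝕂 →L[𝕂] 𝕂 :=
  LinearMap.mkContinuous
    { toFun := fun x => x.toFinsupp a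
      map_add' := fun _ _ => rfl
      map_smul' := fun _ _ => rfl } 1
    (by
      intro x
      have h1 : ‖x.toFinsupp a‖ ≤ combNorm 𝕂 F x.toFinsupp := by
        have := sum_le_combNorm 𝕂 F x.toFinsupp (F.singleton_mem a)
        simpa using this
      rw [C00.norm_def]
      rw [one_mul]
      exact h1)

/-- The coordinate functional `e_a^*` of the dual of the combinatorial space `X_F`. -/
def coordFn (F : CombFamily ι) (a : ι) : StrongDual 𝕂 (XF F 𝕂) :=
  (coordC00 𝕂 F a).extend (UniformSpace.Completion.toComplL : C00 F 𝕂 →L[𝕂] XF F 𝕂)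

/-- An extreme point of a convex set `B`: a point of `B` which is not a proper convex
combination of two distinct points of `B`. -/
def IsExtremePoint {E : Type*} [AddCommGroup E] [Module 𝕂 E] (B : Set E) (x : E) : Prop :=
  x ∈ B ∧ ∀ x₁ ∈ B, ∀ x₂ ∈ B, ∀ t : ℝ, 0 < t → t < 1 →
    x = (t : 𝕂) • x₁ + ((1 - t : ℝ) : 𝕂) • x₂ → x₁ = x₂

namespace S6

open UniformSpace

/-- The canonical inclusion of `c₀₀` into the completion `X_F`. -/
def inc (F : CombFamily ι) : C00 F 𝕂 →L[𝕂] XF F 𝕂 :=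
  UniformSpace.Completion.toComplL

lemma norm_inc (F : CombFamily ι) (x : C00 F 𝕂) : ‖inc 𝕂 F x‖ = ‖x‖ :=
  UniformSpace.Completion.norm_coe x

lemma denseRange_inc (F : CombFamily ι) : DenseRange (inc 𝕂 F) :=
  UniformSpace.Completion.denseRange_coe

lemma coordFn_inc (F : CombFamily ι) (b : ι) (x : C00 F 𝕂) :
    coordFn 𝕂 F b (inc 𝕂 F x) = x.toFinsupp b :=
  ContinuousLinearMap.extend_eq _ UniformSpace.Completion.denseRange_coe
    (UniformSpace.Completion.isUniformInducing_coe _) x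

/-- The unit basis vector inside `X_F`. -/
def eVec (F : CombFamily ι) (b : ι) : XF F 𝕂 :=
  inc 𝕂 F (C00.of F (Finsupp.single b 1))

/-- The functional `∑_{b ∈ m} e_b^*`. -/
def psiD (F : CombFamily ι) (m : Finset ι) : StrongDual 𝕂 (XF F 𝕂) :=
  ∑ b ∈ m, coordFn 𝕂 F b

lemma psiD_inc (F : CombFamily ι) (m : Finset ι) (x : C00 F 𝕂) :
    psiD 𝕂 F m (inc 𝕂 F x) = ∑ b ∈ m, x.toFinsupp b := by
  simp [psiD, ContinuousLinearMap.sum_apply, coordFn_inc]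

lemma psiD_apply_le (F : CombFamily ι) {m : Finset ι} (hm : m ∈ F.sets) (y : XF F 𝕂) :
    ‖psiD 𝕂 F m y‖ ≤ ‖y‖ := by
  refine UniformSpace.Completion.induction_on (α := C00 F 𝕂) y ?_ ?_
  · exact isClosed_le ((psiD 𝕂 F m).continuous.norm) continuous_norm
  · intro x
    have h : ‖psiD 𝕂 F m (inc 𝕂 F x)‖ ≤ ‖inc 𝕂 F x‖ := by
      rw [psiD_inc, norm_inc, C00.norm_def]
      calc ‖∑ b ∈ m, x.toFinsupp b‖ ≤ ∑ b ∈ m, ‖x.toFinsupp b‖ := norm_sum_le _ _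
        _ ≤ combNorm 𝕂 F x.toFinsupp := sum_le_combNorm 𝕂 F _ hm
    exact h

lemma coordFn_eq_psiD (F : CombFamily ι) (b : ι) :
    coordFn 𝕂 F b = psiD 𝕂 F {b} := by
  simp [psiD]

lemma coordFn_apply_le (F : CombFamily ι) (b : ι) (y : XF F 𝕂) :
    ‖coordFn 𝕂 F b y‖ ≤ ‖y‖ := by
  rw [coordFn_eq_psiD]
  exact psiD_apply_le 𝕂 F (F.singleton_mem b) y

lemma psiD_norm_le (F : CombFamily ι) {m : Finset ι} (hm : m ∈ F.sets) :
    ‖psiD 𝕂 F m‖ ≤ 1 :=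
  ContinuousLinearMap.opNorm_le_bound _ zero_le_one fun y => by
    simpa using psiD_apply_le 𝕂 F hm y

lemma norm_single_le (F : CombFamily ι) (b : ι) (lam : 𝕂) (hlam : ‖lam‖ ≤ 1) :
    ‖C00.of F (Finsupp.single b lam)‖ ≤ 1 := by
  rw [C00.norm_def]
  show combNorm 𝕂 F (Finsupp.single b lam) ≤ 1
  refine combNorm_le 𝕂 F _ ?_
  intro s _
  have h : ∀ c ∈ s, ‖(Finsupp.single b lam) c‖ = if b = c then ‖lam‖ else 0 := by
    intro c _
    rw [Finsupp.single_apply]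
    split <;> simp
  rw [Finset.sum_congr rfl h, Finset.sum_ite_eq]
  split <;> simp [hlam]

lemma norm_eVec_le (F : CombFamily ι) (b : ι) : ‖eVec 𝕂 F b‖ ≤ 1 := by
  rw [eVec, norm_inc]
  exact norm_single_le 𝕂 F b 1 (by simp)

lemma eq_one_of_re {c : 𝕂} (h : ‖c‖ ≤ 1) (hre : RCLike.re c = 1) : c = 1 := by
  have h1 : RCLike.normSq c = ‖c‖ ^ 2 := RCLike.normSq_eq_def' c
  have h2 : RCLike.normSq c
      = RCLike.re c * RCLike.re c + RCLike.im c * RCLike.im c := RCLike.normSq_apply c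
  have h3 : RCLike.im c * RCLike.im c ≤ 0 := by nlinarith [norm_nonneg c]
  have h4 : RCLike.im c * RCLike.im c = 0 :=
    le_antisymm h3 (mul_self_nonneg _)
  have him : RCLike.im c = 0 := mul_self_eq_zero.mp h4
  exact RCLike.ext (by rw [hre, RCLike.one_re]) (by rw [him, RCLike.one_im])

lemma key_arith : ∀ s r₁ r₂ : ℝ, 0 < s → s < 1 → r₁ ≤ 1 → r₂ ≤ 1 →
    s * r₁ + (1 - s) * r₂ = 1 → r₁ = 1 := by
  intro s r₁ r₂ hs0 hs1 hr₁ hr₂ hsum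
  by_contra hne
  have hlt : r₁ < 1 := lt_of_le_of_ne hr₁ hne
  nlinarith

lemma both_one {c₁ c₂ : 𝕂} (h₁ : ‖c₁‖ ≤ 1) (h₂ : ‖c₂‖ ≤ 1) {t : ℝ} (ht0 : 0 < t)
    (ht1 : t < 1) (h : (t : 𝕂) * c₁ + ((1 - t : ℝ) : 𝕂) * c₂ = 1) : c₁ = 1 ∧ c₂ = 1 := by
  have hre := congrArg RCLike.re h
  rw [map_add, RCLike.re_ofReal_mul, RCLike.re_ofReal_mul, RCLike.one_re] at hre
  have hr1 : RCLike.re c₁ ≤ 1 := le_trans (le_abs_self _) ((RCLike.abs_re_le_norm c₁).trans h₁)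
  have hr2 : RCLike.re c₂ ≤ 1 := le_trans (le_abs_self _) ((RCLike.abs_re_le_norm c₂).trans h₂)
  have e1 : RCLike.re c₁ = 1 := key_arith t _ _ ht0 ht1 hr1 hr2 hre
  have e2 : RCLike.re c₂ = 1 := by
    refine key_arith (1 - t) _ _ (by linarith) (by linarith) hr2 hr1 ?_
    linear_combination hre
  exact ⟨eq_one_of_re 𝕂 h₁ e1, eq_one_of_re 𝕂 h₂ e2⟩

lemma coord_zero (F : CombFamily ι) (hFh : IsHereditary F.sets) {m : Finset ι} {c : ι}
    (hm : m ∈ famMAX F.sets) (hc : c ∉ m) {x : StrongDual 𝕂 (XF F 𝕂)} (hx : ‖x‖ ≤ 1)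
    (hone : ∀ b ∈ m, x (eVec 𝕂 F b) = 1) : x (eVec 𝕂 F c) = 0 := by
  by_contra hμ
  set μ : 𝕂 := x (eVec 𝕂 F c) with hμdef
  set lam : 𝕂 := (‖μ‖ : 𝕂) / μ with hlamdef
  have hμ' : μ ≠ 0 := hμ
  have hlam_norm : ‖lam‖ = 1 := by
    rw [hlamdef, norm_div, RCLike.norm_ofReal, abs_of_nonneg (norm_nonneg μ)]
    exact div_self (norm_ne_zero_iff.2 hμ')
  have hlamμ : lam * μ = (‖μ‖ : 𝕂) := by
    rw [hlamdef]
    exact div_mul_cancel₀ _ hμ'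
  -- the test vector
  set v : ι →₀ 𝕂 := (∑ b ∈ m, Finsupp.single b 1) + Finsupp.single c lam with hvdef
  have hvapp : ∀ d : ι, v d = (if d ∈ m then (1 : 𝕂) else 0) + (if c = d then lam else 0) := by
    intro d
    rw [hvdef, Finsupp.add_apply, Finsupp.single_apply, Finsupp.finset_sum_apply]
    congr 1
    rw [Finset.sum_congr rfl (fun b _ => Finsupp.single_apply)]
    exact Finset.sum_ite_eq' m d (fun _ => (1 : 𝕂))
  -- norm bound for v
  have hnv : ‖C00.of F v‖ ≤ (m.card : ℝ) := by
    rw [C00.norm_def]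
    show combNorm 𝕂 F v ≤ (m.card : ℝ)
    refine combNorm_le 𝕂 F _ ?_
    intro s hs
    have hb : ∀ d ∈ s, ‖v d‖ ≤ if d ∈ insert c m then (1 : ℝ) else 0 := by
      intro d _
      rw [hvapp d]
      by_cases hdm : d ∈ m
      · have hcd : ¬ (c = d) := fun h => hc (h ▸ hdm)
        simp [hdm, hcd, Finset.mem_insert]
      · by_cases hcd : c = d
        · simp [← hcd, hc, hlam_norm]
        · have hdc : d ≠ c := fun h => hcd h.symm
          simp [hdm, hcd, hdc, Finset.mem_insert]
    calc ∑ d ∈ s, ‖v d‖ ≤ ∑ d ∈ s, (if d ∈ insert c m then (1 : ℝ) else 0) :=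
          Finset.sum_le_sum hb
      _ = ∑ d ∈ s ∩ insert c m, (1 : ℝ) := Finset.sum_ite_mem s (insert c m) (fun _ => (1 : ℝ))
      _ = ((s ∩ insert c m).card : ℝ) := by simp
      _ ≤ (m.card : ℝ) := by
          have h1 : s ∩ insert c m ∈ F.sets := hFh Finset.inter_subset_left hs
          have h2 : s ∩ insert c m ⊆ insert c m := Finset.inter_subset_right
          have hcard : (s ∩ insert c m).card ≤ m.card := by
            by_contra hlt
            push_neg at hlt
            have hci : (insert c m).card = m.card + 1 := Finset.card_insert_of_notMem hc
            have heq : s ∩ insert c m = insert c m :=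
              Finset.eq_of_subset_of_card_le h2 (by omega)
            rw [heq] at h1
            have := hm.2 (insert c m) h1 (Finset.subset_insert c m)
            exact hc (this ▸ Finset.mem_insert_self c m)
          exact_mod_cast hcard
  -- decomposition of v
  have hv : C00.of F v
      = (∑ b ∈ m, C00.of F (Finsupp.single b (1 : 𝕂))) + lam • C00.of F (Finsupp.single c 1) := by
    show v = (∑ b ∈ m, Finsupp.single b (1 : 𝕂)) + lam • Finsupp.single c (1 : 𝕂)
    rw [hvdef, Finsupp.smul_single, smul_eq_mul, mul_one]
  have hxv : x (inc 𝕂 F (C00.of F v)) = ((m.card : ℝ) : 𝕂) + (‖μ‖ : 𝕂) := by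
    rw [hv]
    simp only [map_add, map_smul, map_sum, smul_eq_mul]
    have hterm : ∀ b ∈ m, x (inc 𝕂 F (C00.of F (Finsupp.single b (1 : 𝕂)))) = 1 := by
      intro b hb
      exact hone b hb
    rw [Finset.sum_congr rfl hterm]
    rw [Finset.sum_const, nsmul_eq_mul, mul_one]
    have hμc : x (inc 𝕂 F (C00.of F (Finsupp.single c (1 : 𝕂)))) = μ := rfl
    rw [hμc, hlamμ]
    push_cast
    ring
  have hle : ‖x (inc 𝕂 F (C00.of F v))‖ ≤ (m.card : ℝ) := by
    calc ‖x (inc 𝕂 F (C00.of F v))‖ ≤ ‖x‖ * ‖inc 𝕂 F (C00.of F v)‖ :=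
          x.le_opNorm _
      _ ≤ 1 * (m.card : ℝ) := by
          refine mul_le_mul hx ?_ (norm_nonneg _) zero_le_one
          rw [norm_inc]
          exact hnv
      _ = (m.card : ℝ) := one_mul _
  rw [hxv] at hle
  have hnorm : ‖((m.card : ℝ) : 𝕂) + ((‖μ‖ : ℝ) : 𝕂)‖ = (m.card : ℝ) + ‖μ‖ := by
    rw [← RCLike.ofReal_add, RCLike.norm_ofReal]
    exact abs_of_nonneg (by positivity)
  rw [hnorm] at hle
  have : ‖μ‖ ≤ 0 := by linarith
  exact hμ' (norm_le_zero_iff.mp this)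

lemma psiD_extreme (F : CombFamily ι) (hFh : IsHereditary F.sets) {m : Finset ι}
    (hm : m ∈ famMAX F.sets) :
    IsExtremePoint 𝕂 (Metric.closedBall (0 : StrongDual 𝕂 (XF F 𝕂)) 1) (psiD 𝕂 F m) := by
  constructor
  · rw [Metric.mem_closedBall, dist_zero_right]
    exact psiD_norm_le 𝕂 F hm.1
  · intro x₁ hx₁ x₂ hx₂ t ht0 ht1 heq
    rw [Metric.mem_closedBall, dist_zero_right] at hx₁ hx₂
    -- pointwise form of heq
    have heq' : ∀ y : XF F 𝕂,
        psiD 𝕂 F m y = (t : 𝕂) * x₁ y + ((1 - t : ℝ) : 𝕂) * x₂ y := by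
      intro y
      have h := congrArg (fun φ : StrongDual 𝕂 (XF F 𝕂) => φ y) heq
      simpa only [ContinuousLinearMap.add_apply, ContinuousLinearMap.smul_apply,
        smul_eq_mul] using h
    -- Step A: both are 1 on coordinates of m
    have hA : ∀ b ∈ m, x₁ (eVec 𝕂 F b) = 1 ∧ x₂ (eVec 𝕂 F b) = 1 := by
      intro b hb
      have hψ : psiD 𝕂 F m (eVec 𝕂 F b) = 1 := by
        rw [eVec, psiD_inc]
        have : ∀ c ∈ m, (C00.of F (Finsupp.single b (1 : 𝕂))).toFinsupp c
            = if b = c then (1 : 𝕂) else 0 := fun c _ => Finsupp.single_apply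
        rw [Finset.sum_congr rfl this, Finset.sum_ite_eq]
        simp [hb]
      have hb1 : ‖x₁ (eVec 𝕂 F b)‖ ≤ 1 := by
        calc ‖x₁ (eVec 𝕂 F b)‖ ≤ ‖x₁‖ * ‖eVec 𝕂 F b‖ := x₁.le_opNorm _
          _ ≤ 1 * 1 := mul_le_mul hx₁ (norm_eVec_le 𝕂 F b) (norm_nonneg _) zero_le_one
          _ = 1 := one_mul 1
      have hb2 : ‖x₂ (eVec 𝕂 F b)‖ ≤ 1 := by
        calc ‖x₂ (eVec 𝕂 F b)‖ ≤ ‖x₂‖ * ‖eVec 𝕂 F b‖ := x₂.le_opNorm _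
          _ ≤ 1 * 1 := mul_le_mul hx₂ (norm_eVec_le 𝕂 F b) (norm_nonneg _) zero_le_one
          _ = 1 := one_mul 1
      exact both_one 𝕂 hb1 hb2 ht0 ht1 (by rw [← heq' (eVec 𝕂 F b), hψ])
    -- Step B: both are 0 outside m
    have hB : ∀ c, c ∉ m → x₁ (eVec 𝕂 F c) = 0 ∧ x₂ (eVec 𝕂 F c) = 0 := by
      intro c hcm
      constructor
      · exact coord_zero 𝕂 F hFh hm hcm hx₁ (fun b hb => (hA b hb).1)
      · exact coord_zero 𝕂 F hFh hm hcm hx₂ (fun b hb => (hA b hb).2)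
    have hcoord : ∀ b : ι, x₁ (eVec 𝕂 F b) = x₂ (eVec 𝕂 F b) := by
      intro b
      by_cases hb : b ∈ m
      · rw [(hA b hb).1, (hA b hb).2]
      · rw [(hB b hb).1, (hB b hb).2]
    -- Step C: conclude equality
    have key : ∀ p : ι →₀ 𝕂, x₁ (inc 𝕂 F (C00.of F p)) = x₂ (inc 𝕂 F (C00.of F p)) := by
      intro p
      induction p using Finsupp.induction with
      | zero =>
          have h0 : C00.of F (0 : ι →₀ 𝕂) = 0 := rfl
          simp only [h0, map_zero]
      | single_add b cv rest hbs hcv ih =>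
          have hsplit : C00.of F (Finsupp.single b cv + rest)
              = cv • C00.of F (Finsupp.single b (1 : 𝕂)) + C00.of F rest := by
            show Finsupp.single b cv + rest = cv • Finsupp.single b (1 : 𝕂) + rest
            rw [Finsupp.smul_single, smul_eq_mul, mul_one]
          rw [hsplit]
          simp only [map_add, map_smul]
          rw [ih]
          have hb : x₁ (inc 𝕂 F (C00.of F (Finsupp.single b (1 : 𝕂))))
              = x₂ (inc 𝕂 F (C00.of F (Finsupp.single b (1 : 𝕂)))) := hcoord b
          rw [hb]
    apply ContinuousLinearMap.coeFn_injective
    refine (denseRange_inc 𝕂 F).equalizer x₁.continuous x₂.continuous ?_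
    funext p
    exact key p.toFinsupp

end S6

/-- Let `F` be a compact hereditary family on an infinite cardinal and let `a`
be such that `{a}` lies in the closure of `F^MAX`. Then the coordinate functional `e_a^*`
belongs to the weak*-closure of the set of extreme points of the closed unit ball of the dual of
`X_F`. -/
theorem statement6 {ι : Type*} [Infinite ι] {𝕂 : Type*} [RCLike 𝕂]
    (F : CombFamily ι)
    (hFc : IsCompactFam F.sets) (hFh : IsHereditary F.sets)
    (a : ι) (ha : chi ({a} : Finset ι) ∈ closure (chiImg (famMAX F.sets))) :
    StrongDual.toWeakDual (coordFn 𝕂 F a) ∈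
      closure (StrongDual.toWeakDual ''
        {φ : StrongDual 𝕂 (XF F 𝕂) |
          IsExtremePoint 𝕂 (Metric.closedBall (0 : StrongDual 𝕂 (XF F 𝕂)) 1) φ}) := by
  refine closure_induced.2 ?_
  rw [mem_closure_iff]
  intro o ho hgo
  obtain ⟨I, u, hIu, hpi⟩ := isOpen_pi_iff.1 ho _ hgo
  -- choose radii for the basic neighborhoods
  have hεu : ∀ v ∈ I, ∃ ε : ℝ, 0 < ε ∧ Metric.ball (coordFn 𝕂 F a v) ε ⊆ u v := by
    intro v hv
    obtain ⟨ho1, ho2⟩ := hIu v hv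
    obtain ⟨ε, hε0, hεb⟩ := Metric.isOpen_iff.1 ho1 _ ho2
    exact ⟨ε, hε0, hεb⟩
  choose! ε hε using hεu
  -- choose finitely supported approximants
  have hwv : ∀ v ∈ I, ∃ p : ι →₀ 𝕂, dist v (S6.inc 𝕂 F (C00.of F p)) < ε v / 2 := by
    intro v hv
    obtain ⟨y, hy⟩ :=
      Metric.denseRange_iff.1 (S6.denseRange_inc 𝕂 F) v (ε v / 2) (half_pos (hε v hv).1)
    exact ⟨y.toFinsupp, hy⟩
  choose! w hw using hwv
  set G : Finset ι := insert a (I.biUnion fun v => (w v).support) with hGdef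
  -- find a maximal set m with m ∩ G = {a}
  have hopen : IsOpen {p : ι → Bool | ∀ b ∈ G, p b = chi ({a} : Finset ι) b} := by
    have hset : {p : ι → Bool | ∀ b ∈ G, p b = chi ({a} : Finset ι) b}
        = Set.pi (↑G : Set ι) (fun b => {chi ({a} : Finset ι) b}) := by
      ext p
      simp [Set.mem_pi]
    rw [hset]
    exact isOpen_set_pi G.finite_toSet (fun b _ => isOpen_discrete _)
  obtain ⟨p, hpo, hps⟩ := mem_closure_iff.1 ha _ hopen (fun b _ => rfl)
  obtain ⟨m, hmMAX, rfl⟩ := hps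
  have hGm : ∀ b ∈ G, (b ∈ m ↔ b = a) := by
    intro b hb
    have h := hpo b hb
    simp only [chi, decide_eq_decide, Finset.mem_singleton] at h
    exact h
  have ham : a ∈ m := (hGm a (Finset.mem_insert_self a _)).2 rfl
  -- the extreme point
  have hφ : S6.psiD 𝕂 F m ∈
      {φ : StrongDual 𝕂 (XF F 𝕂) |
        IsExtremePoint 𝕂 (Metric.closedBall (0 : StrongDual 𝕂 (XF F 𝕂)) 1) φ} :=
    S6.psiD_extreme 𝕂 F hFh hmMAX
  refine ⟨_, hpi ?_, Set.mem_image_of_mem _ (Set.mem_image_of_mem _ hφ)⟩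
  intro v hv
  refine (hε v hv).2 ?_
  rw [Metric.mem_ball]
  show dist (S6.psiD 𝕂 F m v) (coordFn 𝕂 F a v) < ε v
  set q : C00 F 𝕂 := C00.of F (w v) with hq
  have hmid : S6.psiD 𝕂 F m (S6.inc 𝕂 F q) = coordFn 𝕂 F a (S6.inc 𝕂 F q) := by
    rw [S6.psiD_inc, S6.coordFn_inc]
    refine Finset.sum_eq_single_of_mem a ham ?_
    intro b hbm hba
    by_contra hne
    have hbsup : b ∈ (w v).support := Finsupp.mem_support_iff.2 hne
    have hbG : b ∈ G := Finset.mem_insert_of_mem (Finset.mem_biUnion.2 ⟨v, hv, hbsup⟩)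
    exact hba ((hGm b hbG).1 hbm)
  have hd1 : dist (S6.psiD 𝕂 F m v) (S6.psiD 𝕂 F m (S6.inc 𝕂 F q)) < ε v / 2 := by
    rw [dist_eq_norm, ← map_sub]
    calc ‖S6.psiD 𝕂 F m (v - S6.inc 𝕂 F q)‖ ≤ ‖v - S6.inc 𝕂 F q‖ :=
          S6.psiD_apply_le 𝕂 F hmMAX.1 _
      _ = dist v (S6.inc 𝕂 F q) := (dist_eq_norm _ _).symm
      _ < ε v / 2 := hw v hv
  have hd2 : dist (S6.psiD 𝕂 F m (S6.inc 𝕂 F q)) (coordFn 𝕂 F a v) < ε v / 2 := by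
    rw [hmid, dist_eq_norm, ← map_sub]
    calc ‖coordFn 𝕂 F a (S6.inc 𝕂 F q - v)‖ ≤ ‖S6.inc 𝕂 F q - v‖ :=
          S6.coordFn_apply_le 𝕂 F a _
      _ = dist v (S6.inc 𝕂 F q) := by rw [← dist_eq_norm, dist_comm]
      _ < ε v / 2 := hw v hv
  calc dist (S6.psiD 𝕂 F m v) (coordFn 𝕂 F a v)
      ≤ dist (S6.psiD 𝕂 F m v) (S6.psiD 𝕂 F m (S6.inc 𝕂 F q))
        + dist (S6.psiD 𝕂 F m (S6.inc 𝕂 F q)) (coordFn 𝕂 F a v) := dist_triangle _ _ _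
    _ < ε v / 2 + ε v / 2 := add_lt_add hd1 hd2
    _ = ε v := add_halves _
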